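/- Let Σ be a set of preference rules partitioned into n levels, and let Γ be the characteristic function of the associated SETAF on the cycle KB. Then for every 1 ≤ j ≤ n, the set of grounded pairs of level at most j equals the set of pairs of level at most j in the j-th iterate Γ^j(∅); consequently the grounded extension equals the union of the first n iterates: Grd = ⋃_{i=1}^n Γ^i(∅). -/
import Mathlib


/-- In a SETAF with attack relation `att`, the set `S` attacks argument `a` if some
subset of `S` attacks `a`. -/
def setafAttacks {A : Type*} (att : Set A → A → Prop) (S : Set A) (a : A) : Prop :=
  ∃ C ⊆ S, att C a

/-- The characteristic function of a SETAF: `Γ S` is the set of arguments defended by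
`S`, i.e. such that every attacker set contains an element attacked by `S`. -/
def charFun {A : Type*} (att : Set A → A → Prop) (S : Set A) : Set A :=
  {a | ∀ E, att E a → ∃ e ∈ E, setafAttacks att S e}

/-- The SETAF attack of the cycle KB: a set `C` of edges attacks the edge `e` iff
`C ∪ {e}` is a conflict (a minimal directed cycle) and `e` is of least importance
(maximal level index) within the cycle. -/
def cycAtt {E : Type*} (Cyc : Set (Set E)) (lvl : E → ℕ) (C : Set E) (e : E) : Prop :=
  e ∉ C ∧ insert e C ∈ Cyc ∧ ∀ e' ∈ C, lvl e' ≤ lvl e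

section Aux

variable {A : Type*} (att : Set A → A → Prop)

lemma charFun_mono {S T : Set A} (h : S ⊆ T) : charFun att S ⊆ charFun att T := by
  intro a ha C hC
  obtain ⟨e, he, C', hC', hatt⟩ := ha C hC
  exact ⟨e, he, C', hC'.trans h, hatt⟩

lemma iter_chain : ∀ i, (charFun att)^[i] ∅ ⊆ (charFun att)^[i + 1] ∅ := by
  intro i
  induction i with
  | zero => simp
  | succ i ih =>
    rw [Function.iterate_succ_apply', Function.iterate_succ_apply']
    exact charFun_mono att ih

lemma iter_le {i j : ℕ} (h : i ≤ j) : (charFun att)^[i] ∅ ⊆ (charFun att)^[j] ∅ := by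
  induction j with
  | zero =>
    have : i = 0 := Nat.le_zero.mp h
    subst this; exact subset_rfl
  | succ j ih =>
    rcases h.lt_or_eq with h' | h'
    · exact (ih (Nat.lt_succ_iff.mp h')).trans (iter_chain att j)
    · subst h'; exact subset_rfl

/-- No iterate attacks an element of any iterate. -/
lemma no_cross_attack : ∀ p i m e, i + m ≤ p →
    e ∈ (charFun att)^[m] ∅ → setafAttacks att ((charFun att)^[i] ∅) e → False := by
  intro p
  induction p with
  | zero =>
    intro i m e hp he _
    have : m = 0 := by omega
    subst this
    simp at he
  | succ p ih =>
    intro i m e hp he hatt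
    match m with
    | 0 => simp at he
    | m + 1 =>
      rw [Function.iterate_succ_apply'] at he
      obtain ⟨C, hC, hCe⟩ := hatt
      obtain ⟨e', he'C, hatt'⟩ := he C hCe
      exact ih m i e' (by omega) (hC he'C) hatt'

end Aux

section CycAux

variable {A : Type*} (Cyc : Set (Set A)) (lvl : A → ℕ)

/-- Any attack from an iterate on `e'` can be replaced by a strict one, where all
attacking edges have level strictly less than `lvl e'`. -/
lemma strict_attack : ∀ i e',
    setafAttacks (cycAtt Cyc lvl) ((charFun (cycAtt Cyc lvl))^[i] ∅) e' →
    ∃ C ⊆ (charFun (cycAtt Cyc lvl))^[i] ∅,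
      cycAtt Cyc lvl C e' ∧ ∀ c ∈ C, lvl c < lvl e' := by
  intro i
  induction i with
  | zero =>
    rintro e' ⟨C, hC, hatt⟩
    simp only [Function.iterate_zero_apply] at hC
    have hCe : C = ∅ := Set.subset_empty_iff.mp hC
    subst hCe
    exact ⟨∅, Set.empty_subset _, hatt, by simp⟩
  | succ i ih =>
    rintro e' ⟨C, hC, hatt⟩
    by_cases hall : ∀ c ∈ C, lvl c < lvl e'
    · exact ⟨C, hC, hatt, hall⟩
    · push_neg at hall
      obtain ⟨c, hcC, hlc⟩ := hall
      obtain ⟨hne, hcyc, hlev⟩ := hatt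
      -- the "swapped" attack on `c`
      have hDatt : cycAtt Cyc lvl (insert e' (C \ {c})) c := by
        refine ⟨?_, ?_, ?_⟩
        · rintro (rfl | hmem)
          · exact hne hcC
          · exact hmem.2 rfl
        · have heq : insert c (insert e' (C \ {c})) = insert e' C := by
            rw [Set.insert_comm, Set.insert_diff_singleton,
              Set.insert_eq_self.mpr hcC]
          rw [heq]; exact hcyc
        · rintro d (rfl | hd)
          · exact hlc
          · exact (hlev d hd.1).trans hlc
      have hc' : c ∈ charFun (cycAtt Cyc lvl) ((charFun (cycAtt Cyc lvl))^[i] ∅) := by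
        have h0 := hC hcC
        rwa [Function.iterate_succ_apply'] at h0
      obtain ⟨d, hdD, hdatt⟩ := hc' _ hDatt
      rcases hdD with rfl | hdC
      · obtain ⟨C'', hC'', h1, h2⟩ := ih d hdatt
        exact ⟨C'', hC''.trans (iter_chain _ i), h1, h2⟩
      · exact absurd hdatt
          (fun h => no_cross_attack (cycAtt Cyc lvl) (i + (i + 1)) i (i + 1) d
            le_rfl (hC hdC.1) h)

/-- Main lemma: a grounded edge of level at most `j` is in the `j`-th iterate. -/
lemma main_level_lemma (hlvl : ∀ e, 1 ≤ lvl e) :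
    ∀ j e m, lvl e ≤ j → e ∈ (charFun (cycAtt Cyc lvl))^[m] ∅ →
      e ∈ (charFun (cycAtt Cyc lvl))^[j] ∅ := by
  intro j
  induction j using Nat.strong_induction_on with
  | _ j ih =>
    intro e m hle hem
    match j, m with
    | 0, _ => exact absurd hle (by have := hlvl e; omega)
    | j + 1, 0 => simp at hem
    | j + 1, m + 1 =>
      rw [Function.iterate_succ_apply'] at hem ⊢
      intro C hCatt
      obtain ⟨e', he'C, hatt'⟩ := hem C hCatt
      obtain ⟨C'', hC'', hattC'', hstrict⟩ := strict_attack Cyc lvl m e' hatt'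
      refine ⟨e', he'C, C'', ?_, hattC''⟩
      intro c hc
      have h1 : lvl c < lvl e' := hstrict c hc
      have h2 : lvl e' ≤ lvl e := hCatt.2.2 e' he'C
      exact ih j (Nat.lt_succ_self j) c m (by omega) (hC'' hc)

end CycAux

/-- For preference rules partitioned into `n` levels, with `Γ` the characteristic
function of the associated SETAF on the cycle KB (edges with levels in `{1,…,n}`,
conflicts `Cyc` the minimal cycles): for every `1 ≤ j ≤ n`, the grounded pairs of level
at most `j` are exactly the pairs of level at most `j` in `Γ^j(∅)`; consequently the
grounded extension is the union of the first `n` iterates. -/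
theorem grounded_level_characterization {E : Type*} [Finite E]
    (Cyc : Set (Set E)) (lvl : E → ℕ) (n : ℕ) (hn : 1 ≤ n)
    (hlvl : ∀ e, 1 ≤ lvl e ∧ lvl e ≤ n) :
    (∀ j, 1 ≤ j → j ≤ n →
      {e | e ∈ ⋃ i : ℕ, (charFun (cycAtt Cyc lvl))^[i] ∅ ∧ lvl e ≤ j} =
      {e | e ∈ (charFun (cycAtt Cyc lvl))^[j] ∅ ∧ lvl e ≤ j}) ∧
    (⋃ i : ℕ, (charFun (cycAtt Cyc lvl))^[i] ∅) =
      ⋃ i ∈ Finset.Icc 1 n, (charFun (cycAtt Cyc lvl))^[i] ∅ := by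
  have hmain := main_level_lemma Cyc lvl (fun e => (hlvl e).1)
  constructor
  · intro j _ _
    ext e
    simp only [Set.mem_setOf_eq, Set.mem_iUnion]
    constructor
    · rintro ⟨⟨m, hm⟩, hle⟩
      exact ⟨hmain j e m hle hm, hle⟩
    · rintro ⟨he, hle⟩
      exact ⟨⟨j, he⟩, hle⟩
  · ext e
    simp only [Set.mem_iUnion, Finset.mem_Icc]
    constructor
    · rintro ⟨m, hm⟩
      exact ⟨n, ⟨hn, le_rfl⟩, hmain n e m (hlvl e).2 hm⟩
    · rintro ⟨i, _, hi⟩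
      exact ⟨i, hi⟩
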